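/- For every θ ∈ [0, π], 2∫_{−π/2}^{π/2} [∫_{−sin(θ+ρ)}^{sin(θ−ρ)} (2/π) t² √(1 − t²) dt] · (1/2) cos ρ dρ = (16 sin θ)/(15π). -/

import Mathlib

open Real intervalIntegral


noncomputable def myPhi : ℝ → ℝ := fun x =>
  (1/8) * (Real.arcsin x - x * (1 - 2*x^2) * Real.sqrt (1 - x^2))

lemma myPhi_cont : Continuous myPhi := by
  unfold myPhi
  exact continuous_const.mul (Real.continuous_arcsin.sub
    (((continuous_id.mul (by fun_prop)).mul (Real.continuous_sqrt.comp (by fun_prop)))))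

lemma g_cont : Continuous (fun t : ℝ => t^2 * Real.sqrt (1 - t^2)) := by fun_prop

lemma myPhi_deriv {x : ℝ} (h1 : -1 < x) (h2 : x < 1) :
    HasDerivAt myPhi (x^2 * Real.sqrt (1 - x^2)) x := by
  have hpos : 0 < 1 - x^2 := by nlinarith
  have hne : (1:ℝ) - x^2 ≠ 0 := ne_of_gt hpos
  have hs : HasDerivAt (fun y : ℝ => Real.sqrt (1 - y^2)) (-(2*x) / (2 * Real.sqrt (1 - x^2))) x := by
    have hinner : HasDerivAt (fun y : ℝ => 1 - y^2) (-(2*x)) x := by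
      simpa using ((hasDerivAt_pow 2 x).const_sub 1)
    simpa [div_eq_mul_inv, mul_comm, Function.comp_def] using (Real.hasDerivAt_sqrt hne).comp x hinner
  have ha : HasDerivAt Real.arcsin (1 / Real.sqrt (1 - x^2)) x :=
    Real.hasDerivAt_arcsin (by linarith) (by linarith)
  have hp : HasDerivAt (fun y : ℝ => y * (1 - 2*y^2)) (1 - 6*x^2) x := by
    have := ((hasDerivAt_id x).mul (((hasDerivAt_pow 2 x).const_mul 2).const_sub 1))
    simp only [id_eq] at this
    exact this.congr_deriv (by ring)
  have hprod : HasDerivAt (fun y : ℝ => y * (1 - 2*y^2) * Real.sqrt (1 - y^2))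
      ((1 - 6*x^2) * Real.sqrt (1 - x^2) + x * (1 - 2*x^2) * (-(2*x) / (2 * Real.sqrt (1 - x^2)))) x :=
    hp.mul hs
  have h := (ha.sub hprod).const_mul (1/8 : ℝ)
  refine h.congr_deriv ?_
  have hsne : Real.sqrt (1 - x^2) ≠ 0 := by
    rw [Real.sqrt_ne_zero']; exact hpos
  have hsq : Real.sqrt (1 - x^2) ^ 2 = 1 - x^2 := Real.sq_sqrt (le_of_lt hpos)
  field_simp
  nlinarith [hsq, Real.sqrt_nonneg (1 - x^2)]

lemma myPhi_zero : myPhi 0 = 0 := by simp [myPhi]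

lemma myPhi_neg (x : ℝ) : myPhi (-x) = - myPhi x := by
  simp only [myPhi, Real.arcsin_neg, neg_sq]
  ring

lemma G_eq : ∀ x ∈ Set.Icc (-1:ℝ) 1,
    (∫ t in (0:ℝ)..x, t^2 * Real.sqrt (1 - t^2)) = myPhi x := by
  have h1 : Set.EqOn (fun x : ℝ => ∫ t in (0:ℝ)..x, t^2 * Real.sqrt (1 - t^2)) myPhi
      (Set.Ioo (-1) 1) := by
    intro x hx
    obtain ⟨hx1, hx2⟩ := hx
    simp only
    rw [intervalIntegral.integral_eq_sub_of_hasDerivAt (f := myPhi)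
      (fun t ht => ?_) (g_cont.intervalIntegrable _ _), myPhi_zero, sub_zero]
    rcases Set.mem_uIcc.mp ht with ⟨h1, h2⟩ | ⟨h1, h2⟩
    · exact myPhi_deriv (by linarith) (by linarith)
    · exact myPhi_deriv (by linarith) (by linarith)
  have h2 := h1.closure
    (intervalIntegral.continuous_primitive (μ := MeasureTheory.volume) (fun a b => g_cont.intervalIntegrable (μ := MeasureTheory.volume) a b) 0)
    myPhi_cont
  rw [closure_Ioo (by norm_num : (-1:ℝ) ≠ 1)] at h2
  exact fun x hx => h2 hx

lemma inner_eq {a b : ℝ} (ha : a ∈ Set.Icc (-1:ℝ) 1) (hb : b ∈ Set.Icc (-1:ℝ) 1) :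
    (∫ t in a..b, (2/π) * t^2 * Real.sqrt (1 - t^2)) = (2/π) * (myPhi b - myPhi a) := by
  have h : ∀ t : ℝ, (2/π) * t^2 * Real.sqrt (1 - t^2) = (2/π) * (t^2 * Real.sqrt (1 - t^2)) := by
    intro t; ring
  simp only [h, intervalIntegral.integral_const_mul]
  have hadd := intervalIntegral.integral_add_adjacent_intervals
    (μ := MeasureTheory.volume) (a := a) (b := 0) (c := b) (f := fun t : ℝ => t^2 * Real.sqrt (1 - t^2))
    (g_cont.intervalIntegrable _ _) (g_cont.intervalIntegrable _ _)
  rw [← hadd, intervalIntegral.integral_symm, G_eq a ha, G_eq b hb]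
  ring

lemma myPhi_sin_low {x : ℝ} (h1 : -(π/2) ≤ x) (h2 : x ≤ π/2) :
    myPhi (Real.sin x) = (1/8) * (x - Real.sin (4*x) / 4) := by
  have harc : Real.arcsin (Real.sin x) = x := Real.arcsin_sin h1 h2
  have hcos : Real.sqrt (1 - Real.sin x ^ 2) = Real.cos x := by
    rw [show (1:ℝ) - Real.sin x ^ 2 = Real.cos x ^ 2 by
      have := Real.sin_sq_add_cos_sq x; linarith]
    exact Real.sqrt_sq (Real.cos_nonneg_of_mem_Icc ⟨h1, h2⟩)
  rw [myPhi, harc, hcos, show (4:ℝ)*x = 2*(2*x) by ring, Real.sin_two_mul,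
    Real.sin_two_mul, Real.cos_two_mul]
  linear_combination (Real.sin x * Real.cos x / 4) * (Real.sin_sq_add_cos_sq x)

lemma myPhi_sin_high {x : ℝ} (h1 : π/2 ≤ x) (h2 : x ≤ 3*π/2) :
    myPhi (Real.sin x) = (1/8) * (π - x + Real.sin (4*x) / 4) := by
  have harc : Real.arcsin (Real.sin x) = π - x := by
    rw [show Real.sin x = Real.sin (π - x) by rw [Real.sin_pi_sub]]
    exact Real.arcsin_sin (by linarith) (by linarith)
  have hcos : Real.sqrt (1 - Real.sin x ^ 2) = -Real.cos x := by
    rw [show (1:ℝ) - Real.sin x ^ 2 = Real.cos x ^ 2 by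
      have := Real.sin_sq_add_cos_sq x; linarith]
    rw [Real.sqrt_sq_eq_abs]
    exact abs_of_nonpos (Real.cos_nonpos_of_pi_div_two_le_of_le h1 (by linarith))
  rw [myPhi, harc, hcos, show (4:ℝ)*x = 2*(2*x) by ring, Real.sin_two_mul,
    Real.sin_two_mul, Real.cos_two_mul]
  linear_combination (-(Real.sin x * Real.cos x) / 4) * (Real.sin_sq_add_cos_sq x)

lemma hd_sin (k ρ : ℝ) : HasDerivAt (fun x : ℝ => Real.sin (k*x)) (k * Real.cos (k*ρ)) ρ := by
  simpa [mul_comm, Function.comp_def] using (Real.hasDerivAt_sin (k*ρ)).comp ρ ((hasDerivAt_id ρ).const_mul k)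

lemma hd_cos (k ρ : ℝ) : HasDerivAt (fun x : ℝ => Real.cos (k*x)) (-(k * Real.sin (k*ρ))) ρ := by
  simpa [mul_comm, Function.comp_def] using (Real.hasDerivAt_cos (k*ρ)).comp ρ ((hasDerivAt_id ρ).const_mul k)

noncomputable def Fm (θ : ℝ) : ℝ → ℝ := fun ρ =>
  (1/(8*π)) * (2*θ*Real.sin ρ - (1/2)*Real.sin (4*θ)*(Real.sin (3*ρ)/6 + Real.sin (5*ρ)/10))

noncomputable def Fr (θ : ℝ) : ℝ → ℝ := fun ρ =>
  (1/(8*π)) * ((π - 2*ρ)*Real.sin ρ - 2*Real.cos ρ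
    + (1/2)*Real.cos (4*θ)*(-(Real.cos (3*ρ)/6) - Real.cos (5*ρ)/10))

noncomputable def Fl (θ : ℝ) : ℝ → ℝ := fun ρ =>
  (1/(8*π)) * ((π + 2*ρ)*Real.sin ρ + 2*Real.cos ρ
    + (1/2)*Real.cos (4*θ)*(Real.cos (3*ρ)/6 + Real.cos (5*ρ)/10))

lemma Fm_deriv (θ ρ : ℝ) : HasDerivAt (Fm θ)
    ((1/(8*π)) * (2*θ*Real.cos ρ - (1/2)*Real.sin (4*θ)*((3*Real.cos (3*ρ))/6 + (5*Real.cos (5*ρ))/10))) ρ := by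
  unfold Fm
  exact (((Real.hasDerivAt_sin ρ).const_mul (2*θ)).sub
    ((((hd_sin 3 ρ).div_const 6).add ((hd_sin 5 ρ).div_const 10)).const_mul
      ((1/2)*Real.sin (4*θ)))).const_mul (1/(8*π))

lemma Fr_deriv (θ ρ : ℝ) : HasDerivAt (Fr θ)
    ((1/(8*π)) * ((π - 2*ρ)*Real.cos ρ
      + (1/2)*Real.cos (4*θ)*((3*Real.sin (3*ρ))/6 + (5*Real.sin (5*ρ))/10))) ρ := by
  unfold Fr
  have hlin : HasDerivAt (fun x : ℝ => π - 2*x) (-2) ρ := by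
    simpa using ((hasDerivAt_id ρ).const_mul 2).const_sub π
  have H := ((hlin.mul (Real.hasDerivAt_sin ρ)).sub ((Real.hasDerivAt_cos ρ).const_mul 2)).add
    (((((hd_cos 3 ρ).div_const 6).neg).sub ((hd_cos 5 ρ).div_const 10)).const_mul
      ((1/2)*Real.cos (4*θ)))
  have H2 := H.const_mul (1/(8*π))
  exact H2.congr_deriv (by ring)

lemma Fl_deriv (θ ρ : ℝ) : HasDerivAt (Fl θ)
    ((1/(8*π)) * ((π + 2*ρ)*Real.cos ρ
      - (1/2)*Real.cos (4*θ)*((3*Real.sin (3*ρ))/6 + (5*Real.sin (5*ρ))/10))) ρ := by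
  unfold Fl
  have hlin : HasDerivAt (fun x : ℝ => π + 2*x) (2) ρ := by
    simpa using (((hasDerivAt_id ρ).const_mul 2).const_add π)
  have H := ((hlin.mul (Real.hasDerivAt_sin ρ)).add ((Real.hasDerivAt_cos ρ).const_mul 2)).add
    ((((hd_cos 3 ρ).div_const 6).add ((hd_cos 5 ρ).div_const 10)).const_mul
      ((1/2)*Real.cos (4*θ)))
  have H2 := H.const_mul (1/(8*π))
  exact H2.congr_deriv (by ring)

lemma main_aux (θ : ℝ) (h0 : 0 ≤ θ) (h1 : θ ≤ π/2) :
    2 * ∫ ρ in (-(π / 2))..(π / 2),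
      (∫ t in (-Real.sin (θ + ρ))..(Real.sin (θ - ρ)),
          (2 / π) * t ^ 2 * Real.sqrt (1 - t ^ 2))
        * ((1 / 2) * Real.cos ρ)
      = 16 * Real.sin θ / (15 * π) := by
  have hπ : (0:ℝ) < π := Real.pi_pos
  have hkey : ∀ ρ : ℝ,
      (∫ t in (-Real.sin (θ + ρ))..(Real.sin (θ - ρ)),
          (2 / π) * t ^ 2 * Real.sqrt (1 - t ^ 2)) * ((1 / 2) * Real.cos ρ)
      = (2/π) * (myPhi (Real.sin (θ - ρ)) + myPhi (Real.sin (θ + ρ))) * ((1/2) * Real.cos ρ) := by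
    intro ρ
    have hm1 := Real.neg_one_le_sin (θ + ρ)
    have hm2 := Real.sin_le_one (θ + ρ)
    have hm3 := Real.neg_one_le_sin (θ - ρ)
    have hm4 := Real.sin_le_one (θ - ρ)
    rw [inner_eq ⟨by linarith, by linarith⟩ ⟨by linarith, by linarith⟩, myPhi_neg]
    ring
  rw [intervalIntegral.integral_congr (g :=
    fun ρ => (2/π) * (myPhi (Real.sin (θ - ρ)) + myPhi (Real.sin (θ + ρ))) * ((1/2) * Real.cos ρ))
    (fun ρ _ => hkey ρ)]
  have hcont : Continuous
      (fun ρ => (2/π) * (myPhi (Real.sin (θ - ρ)) + myPhi (Real.sin (θ + ρ))) * ((1/2) * Real.cos ρ)) := by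
    apply Continuous.mul
    · exact continuous_const.mul ((myPhi_cont.comp (by fun_prop)).add (myPhi_cont.comp (by fun_prop)))
    · fun_prop
  have e1 := intervalIntegral.integral_add_adjacent_intervals
    (μ := MeasureTheory.volume) (a := θ - π/2) (b := -(θ - π/2)) (c := π/2)
    (f := fun ρ => (2/π) * (myPhi (Real.sin (θ - ρ)) + myPhi (Real.sin (θ + ρ))) * ((1/2) * Real.cos ρ))
    (hcont.intervalIntegrable _ _) (hcont.intervalIntegrable _ _)
  have e2 := intervalIntegral.integral_add_adjacent_intervals
    (μ := MeasureTheory.volume) (a := -(π/2)) (b := θ - π/2) (c := π/2)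
    (f := fun ρ => (2/π) * (myPhi (Real.sin (θ - ρ)) + myPhi (Real.sin (θ + ρ))) * ((1/2) * Real.cos ρ))
    (hcont.intervalIntegrable _ _) (hcont.intervalIntegrable _ _)
  rw [← e2, ← e1]
  -- middle piece
  have hM : (∫ ρ in (θ - π/2)..(-(θ - π/2)),
      (2/π) * (myPhi (Real.sin (θ - ρ)) + myPhi (Real.sin (θ + ρ))) * ((1/2) * Real.cos ρ))
      = Fm θ (-(θ - π/2)) - Fm θ (θ - π/2) := by
    apply intervalIntegral.integral_eq_sub_of_hasDerivAt
    · intro ρ hρ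
      rw [Set.uIcc_of_le (by linarith)] at hρ
      obtain ⟨hr1, hr2⟩ := hρ
      have eq1 : myPhi (Real.sin (θ - ρ)) = (1/8) * ((θ - ρ) - Real.sin (4*(θ - ρ)) / 4) :=
        myPhi_sin_low (by linarith) (by linarith)
      have eq2 : myPhi (Real.sin (θ + ρ)) = (1/8) * ((θ + ρ) - Real.sin (4*(θ + ρ)) / 4) :=
        myPhi_sin_low (by linarith) (by linarith)
      rw [eq1, eq2]
      have hD := Fm_deriv θ ρ
      refine hD.congr_deriv ?_
      rw [show (4:ℝ)*(θ - ρ) = 4*θ - 4*ρ by ring, Real.sin_sub,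
        show (4:ℝ)*(θ + ρ) = 4*θ + 4*ρ by ring, Real.sin_add,
        show (3:ℝ)*ρ = 4*ρ - ρ by ring, Real.cos_sub,
        show (5:ℝ)*ρ = 4*ρ + ρ by ring, Real.cos_add]
      ring
    · exact hcont.intervalIntegrable _ _
  -- right piece
  have hR : (∫ ρ in (-(θ - π/2))..(π/2),
      (2/π) * (myPhi (Real.sin (θ - ρ)) + myPhi (Real.sin (θ + ρ))) * ((1/2) * Real.cos ρ))
      = Fr θ (π/2) - Fr θ (-(θ - π/2)) := by
    apply intervalIntegral.integral_eq_sub_of_hasDerivAt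
    · intro ρ hρ
      rw [Set.uIcc_of_le (by linarith)] at hρ
      obtain ⟨hr1, hr2⟩ := hρ
      have eq1 : myPhi (Real.sin (θ - ρ)) = (1/8) * ((θ - ρ) - Real.sin (4*(θ - ρ)) / 4) :=
        myPhi_sin_low (by linarith) (by linarith)
      have eq2 : myPhi (Real.sin (θ + ρ)) = (1/8) * (π - (θ + ρ) + Real.sin (4*(θ + ρ)) / 4) :=
        myPhi_sin_high (by linarith) (by linarith)
      rw [eq1, eq2]
      have hD := Fr_deriv θ ρ
      refine hD.congr_deriv ?_
      rw [show (4:ℝ)*(θ - ρ) = 4*θ - 4*ρ by ring, Real.sin_sub,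
        show (4:ℝ)*(θ + ρ) = 4*θ + 4*ρ by ring, Real.sin_add,
        show (3:ℝ)*ρ = 4*ρ - ρ by ring, Real.sin_sub,
        show (5:ℝ)*ρ = 4*ρ + ρ by ring, Real.sin_add]
      ring
    · exact hcont.intervalIntegrable _ _
  -- left piece
  have hL : (∫ ρ in (-(π/2))..(θ - π/2),
      (2/π) * (myPhi (Real.sin (θ - ρ)) + myPhi (Real.sin (θ + ρ))) * ((1/2) * Real.cos ρ))
      = Fl θ (θ - π/2) - Fl θ (-(π/2)) := by
    apply intervalIntegral.integral_eq_sub_of_hasDerivAt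
    · intro ρ hρ
      rw [Set.uIcc_of_le (by linarith)] at hρ
      obtain ⟨hr1, hr2⟩ := hρ
      have eq1 : myPhi (Real.sin (θ - ρ)) = (1/8) * (π - (θ - ρ) + Real.sin (4*(θ - ρ)) / 4) :=
        myPhi_sin_high (by linarith) (by linarith)
      have eq2 : myPhi (Real.sin (θ + ρ)) = (1/8) * ((θ + ρ) - Real.sin (4*(θ + ρ)) / 4) :=
        myPhi_sin_low (by linarith) (by linarith)
      rw [eq1, eq2]
      have hD := Fl_deriv θ ρ
      refine hD.congr_deriv ?_
      rw [show (4:ℝ)*(θ - ρ) = 4*θ - 4*ρ by ring, Real.sin_sub,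
        show (4:ℝ)*(θ + ρ) = 4*θ + 4*ρ by ring, Real.sin_add,
        show (3:ℝ)*ρ = 4*ρ - ρ by ring, Real.sin_sub,
        show (5:ℝ)*ρ = 4*ρ + ρ by ring, Real.sin_add]
      ring
    · exact hcont.intervalIntegrable _ _
  rw [hM, hR, hL]
  unfold Fm Fr Fl
  have q5 : ∀ x:ℝ, (5:ℝ)*x = 2*x + 3*x := fun x => by ring
  have q4 : ∀ x:ℝ, (4:ℝ)*x = 2*x + 2*x := fun x => by ring
  simp only [mul_neg, Real.sin_neg, Real.cos_neg, neg_neg, q5, q4,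
    Real.sin_add, Real.cos_add, Real.sin_two_mul, Real.cos_two_mul,
    Real.sin_three_mul, Real.cos_three_mul,
    Real.sin_sub, Real.cos_sub, Real.sin_pi_div_two, Real.cos_pi_div_two]
  have hs := Real.sin_sq_add_cos_sq θ
  set s := Real.sin θ
  set co := Real.cos θ
  linear_combination (((7:ℝ)/60)*s - (2/15)*s*co^2 - (1/15)*s*co^4 + (4/5)*s*co^6
    + (1/5)*s^3 - (7/15)*s^3*co^2 - (4/5)*s^5*co^2) / π * hs

lemma even_flip (a b : ℝ) :
    (∫ t in (-a)..b, (2 / π) * t ^ 2 * Real.sqrt (1 - t ^ 2))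
      = ∫ t in (-b)..a, (2 / π) * t ^ 2 * Real.sqrt (1 - t ^ 2) := by
  have h := intervalIntegral.integral_comp_neg (a := -b) (b := a)
    (f := fun t : ℝ => (2 / π) * t ^ 2 * Real.sqrt (1 - t ^ 2))
  simp only [neg_neg] at h
  rw [← h]
  apply intervalIntegral.integral_congr
  intro t _
  simp only [neg_sq]

/-- For `θ ∈ [0, π]`,
`2∫_{-π/2}^{π/2} [∫_{-sin(θ+ρ)}^{sin(θ-ρ)} (2/π) t² √(1-t²) dt] (1/2) cos ρ dρ = 16 sin θ/(15π)`. -/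
theorem third_integral_eval (θ : ℝ) (hθ : θ ∈ Set.Icc 0 π) :
    2 * ∫ ρ in (-(π / 2))..(π / 2),
      (∫ t in (-Real.sin (θ + ρ))..(Real.sin (θ - ρ)),
          (2 / π) * t ^ 2 * Real.sqrt (1 - t ^ 2))
        * ((1 / 2) * Real.cos ρ)
      = 16 * Real.sin θ / (15 * π) := by
  obtain ⟨h0, h1⟩ := hθ
  rcases le_total θ (π/2) with h | h
  · exact main_aux θ h0 h
  · have H := main_aux (π - θ) (by linarith) (by linarith)
    rw [Real.sin_pi_sub] at H
    rw [← H]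
    congr 1
    apply intervalIntegral.integral_congr
    intro ρ _
    simp only
    congr 1
    rw [show π - θ + ρ = π - (θ - ρ) by ring, show π - θ - ρ = π - (θ + ρ) by ring,
      Real.sin_pi_sub, Real.sin_pi_sub]
    exact even_flip (Real.sin (θ + ρ)) (Real.sin (θ - ρ))
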